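/- For invertible formal power series h₁, h₂ of order 1, h₁∘ĥ₁ = h₂∘ĥ₂ if and only if φ = h̄₁∘h₂ is an odd power series (φ(-z) = -φ(z)). -/

import Mathlib

open PowerSeries

/-- Composition `f ∘ g` of formal power series over `ℝ`, i.e. `f(g(z))`
(the usual composition when `g` has zero constant term). -/
noncomputable def pscomp (f g : PowerSeries ℝ) : PowerSeries ℝ :=
  PowerSeries.mk fun n => ∑ k ∈ Finset.range (n + 1), coeff k f * coeff n (g ^ k)

lemma coeff_pscomp (f g : PowerSeries ℝ) (n : ℕ) :
    coeff n (pscomp f g) = ∑ k ∈ Finset.range (n + 1), coeff k f * coeff n (g ^ k) := by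
  simp [pscomp]

lemma coeff_pow_eq_zero {g : PowerSeries ℝ} (hg : constantCoeff g = 0)
    {n k : ℕ} (h : n < k) : coeff n (g ^ k) = 0 := by
  have : (X : PowerSeries ℝ) ^ k ∣ g ^ k := pow_dvd_pow_of_dvd (X_dvd_iff.2 hg) k
  exact X_pow_dvd_iff.1 this n h

lemma coeff_pscomp_of_le {g : PowerSeries ℝ} (hg : constantCoeff g = 0)
    (f : PowerSeries ℝ) {n m : ℕ} (h : n + 1 ≤ m) :
    coeff n (pscomp f g) = ∑ k ∈ Finset.range m, coeff k f * coeff n (g ^ k) := by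
  rw [coeff_pscomp]
  refine Finset.sum_subset (Finset.range_subset_range.2 h) ?_
  intro k _ hk
  rw [coeff_pow_eq_zero hg (by simpa using hk), mul_zero]

lemma pscomp_mul {g : PowerSeries ℝ} (hg : constantCoeff g = 0) (a b : PowerSeries ℝ) :
    pscomp (a * b) g = pscomp a g * pscomp b g := by
  ext n
  set F : ℕ × ℕ → ℝ := fun p => coeff p.1 a * coeff p.2 b * coeff n (g ^ (p.1 + p.2)) with hF
  have key : ∀ S : Finset (ℕ × ℕ),
      (Finset.range (n+1) ×ˢ Finset.range (n+1)).filter (fun p => p.1 + p.2 ≤ n) ⊆ S →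
      (∀ p ∈ S, p.1 + p.2 ≤ n → p.1 ≤ n ∧ p.2 ≤ n) →
      ∑ p ∈ S, F p
        = ∑ p ∈ (Finset.range (n+1) ×ˢ Finset.range (n+1)).filter (fun p => p.1 + p.2 ≤ n), F p := by
    intro S hsub hmem
    refine (Finset.sum_subset ?_ ?_).symm
    · exact hsub
    · intro p hp hp'
      have : ¬ p.1 + p.2 ≤ n := by
        intro h
        exact hp' (Finset.mem_filter.2 ⟨Finset.mem_product.2
          ⟨Finset.mem_range.2 (Nat.lt_succ_of_le (hmem p hp h).1),
           Finset.mem_range.2 (Nat.lt_succ_of_le (hmem p hp h).2)⟩, h⟩)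
      rw [hF]
      simp only []
      rw [coeff_pow_eq_zero hg (by omega), mul_zero]
  have lhs : coeff n (pscomp (a * b) g)
      = ∑ p ∈ (Finset.range (n+1)).biUnion (fun m => Finset.HasAntidiagonal.antidiagonal m), F p := by
    rw [coeff_pscomp]
    rw [Finset.sum_biUnion]
    · refine Finset.sum_congr rfl fun m hm => ?_
      rw [coeff_mul, Finset.sum_mul]
      refine Finset.sum_congr rfl fun p hp => ?_
      have : p.1 + p.2 = m := Finset.HasAntidiagonal.mem_antidiagonal.1 hp
      rw [hF]; simp only []; rw [this]
    · intro x _ y _ hxy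
      simp only [Finset.disjoint_left]
      intro p hp hp'
      exact hxy (by rw [← Finset.HasAntidiagonal.mem_antidiagonal.1 hp, Finset.HasAntidiagonal.mem_antidiagonal.1 hp'])
  have rhs : coeff n (pscomp a g * pscomp b g)
      = ∑ p ∈ Finset.range (n+1) ×ˢ Finset.range (n+1), F p := by
    rw [coeff_mul]
    have : ∀ p : ℕ × ℕ, p ∈ Finset.HasAntidiagonal.antidiagonal n →
        coeff p.1 (pscomp a g) * coeff p.2 (pscomp b g)
          = ∑ q ∈ Finset.range (n+1) ×ˢ Finset.range (n+1),
              coeff q.1 a * coeff p.1 (g ^ q.1) * (coeff q.2 b * coeff p.2 (g ^ q.2)) := by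
      intro p hp
      have h1 : p.1 + 1 ≤ n + 1 := by
        have := Finset.HasAntidiagonal.mem_antidiagonal.1 hp; omega
      have h2 : p.2 + 1 ≤ n + 1 := by
        have := Finset.HasAntidiagonal.mem_antidiagonal.1 hp; omega
      rw [coeff_pscomp_of_le hg a h1, coeff_pscomp_of_le hg b h2, Finset.sum_mul_sum,
        ← Finset.sum_product']
    rw [Finset.sum_congr rfl this, Finset.sum_comm]
    refine Finset.sum_congr rfl fun q hq => ?_
    rw [hF]
    simp only []
    rw [pow_add, coeff_mul, Finset.mul_sum]
    exact Finset.sum_congr rfl fun p _ => by ring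
  have sub1 : (Finset.range (n+1) ×ˢ Finset.range (n+1)).filter (fun p => p.1 + p.2 ≤ n)
      ⊆ (Finset.range (n+1)).biUnion (fun m => Finset.HasAntidiagonal.antidiagonal m) := by
    intro p hp
    have h := (Finset.mem_filter.1 hp).2
    simp only [Finset.mem_biUnion, Finset.mem_range, Finset.HasAntidiagonal.mem_antidiagonal]
    exact ⟨p.1 + p.2, Nat.lt_succ_of_le h, rfl⟩
  have mem1 : ∀ p ∈ (Finset.range (n+1)).biUnion (fun m => Finset.HasAntidiagonal.antidiagonal m),
      p.1 + p.2 ≤ n → p.1 ≤ n ∧ p.2 ≤ n := by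
    intro p _ h; omega
  have sub2 : (Finset.range (n+1) ×ˢ Finset.range (n+1)).filter (fun p => p.1 + p.2 ≤ n)
      ⊆ Finset.range (n+1) ×ˢ Finset.range (n+1) := fun p hp => (Finset.mem_filter.1 hp).1
  have mem2 : ∀ p ∈ Finset.range (n+1) ×ˢ Finset.range (n+1),
      p.1 + p.2 ≤ n → p.1 ≤ n ∧ p.2 ≤ n := by
    intro p _ h; omega
  rw [lhs, rhs, key _ sub1 mem1, key _ sub2 mem2]

lemma pscomp_one (g : PowerSeries ℝ) : pscomp 1 g = 1 := by
  ext n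
  rw [coeff_pscomp]
  rw [Finset.sum_eq_single 0]
  · simp
  · intro k _ hk
    rw [coeff_one, if_neg hk, zero_mul]
  · simp

lemma pscomp_neg (f g : PowerSeries ℝ) : pscomp (-f) g = -(pscomp f g) := by
  ext n
  rw [map_neg, coeff_pscomp, coeff_pscomp, ← Finset.sum_neg_distrib]
  exact Finset.sum_congr rfl fun k _ => by rw [map_neg, neg_mul]

lemma pscomp_pow {g : PowerSeries ℝ} (hg : constantCoeff g = 0) (a : PowerSeries ℝ) (k : ℕ) :
    pscomp (a ^ k) g = (pscomp a g) ^ k := by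
  induction k with
  | zero => simpa using pscomp_one g
  | succ k ih => rw [pow_succ, pow_succ, pscomp_mul hg, ih]

lemma pscomp_X_right (f : PowerSeries ℝ) : pscomp f X = f := by
  ext n
  rw [coeff_pscomp]
  rw [Finset.sum_eq_single n]
  · simp
  · intro k _ hk
    rw [coeff_X_pow, if_neg (fun h => hk h.symm), mul_zero]
  · simp

lemma pscomp_X_left {g : PowerSeries ℝ} (hg : constantCoeff g = 0) : pscomp X g = g := by
  ext n
  rw [coeff_pscomp]
  rw [Finset.sum_eq_single 1]
  · simp
  · intro k _ hk
    rw [coeff_X, if_neg hk, zero_mul]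
  · intro h
    simp only [Finset.mem_range, not_lt] at h
    have hn : n = 0 := by omega
    subst hn
    simp [pow_one, coeff_zero_eq_constantCoeff, hg]

lemma constantCoeff_pscomp {g : PowerSeries ℝ} (hg : constantCoeff g = 0)
    (f : PowerSeries ℝ) : constantCoeff (pscomp f g) = constantCoeff f := by
  rw [← coeff_zero_eq_constantCoeff_apply, coeff_pscomp, Finset.sum_range_one, pow_zero]
  simp

lemma pscomp_assoc {g h : PowerSeries ℝ} (hg : constantCoeff g = 0)
    (hh : constantCoeff h = 0) (f : PowerSeries ℝ) :
    pscomp (pscomp f g) h = pscomp f (pscomp g h) := by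
  ext n
  rw [coeff_pscomp, coeff_pscomp]
  have step : ∀ k ∈ Finset.range (n+1),
      coeff k (pscomp f g) * coeff n (h ^ k)
        = ∑ j ∈ Finset.range (n+1), coeff j f * coeff k (g ^ j) * coeff n (h ^ k) := by
    intro k hk
    rw [coeff_pscomp_of_le hg f (Nat.succ_le_succ (Nat.lt_succ_iff.1 (Finset.mem_range.1 hk))),
      Finset.sum_mul]
  rw [Finset.sum_congr rfl step, Finset.sum_comm]
  refine Finset.sum_congr rfl fun j _ => ?_
  rw [← pscomp_pow hh g j, coeff_pscomp, Finset.mul_sum]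
  exact Finset.sum_congr rfl fun k _ => by ring

lemma constantCoeff_negX : constantCoeff (-X : PowerSeries ℝ) = 0 := by simp

lemma pscomp_negX_left {f : PowerSeries ℝ} (hf : constantCoeff f = 0) :
    pscomp (-X) f = -f := by
  rw [pscomp_neg, pscomp_X_left hf]

lemma pscomp_negX_negX : pscomp (-X : PowerSeries ℝ) (-X) = X := by
  rw [pscomp_negX_left constantCoeff_negX, neg_neg]

/-- For invertible h₁, h₂ of order 1, h₁∘ĥ₁ = h₂∘ĥ₂ iff φ = h̄₁∘h₂ is odd. -/
theorem stmt_4 (h1 h2 g1 g2 : PowerSeries ℝ)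
    (h10 : constantCoeff h1 = 0) (h11 : coeff 1 h1 ≠ 0)
    (h20 : constantCoeff h2 = 0) (h21 : coeff 1 h2 ≠ 0)
    (hi1 : pscomp h1 g1 = X) (hi2 : pscomp g1 h1 = X)
    (hi3 : pscomp h2 g2 = X) (hi4 : pscomp g2 h2 = X) :
    pscomp h1 (-(pscomp g1 (-X))) = pscomp h2 (-(pscomp g2 (-X))) ↔
      pscomp (pscomp g1 h2) (-X) = -(pscomp g1 h2) := by
  have hν : constantCoeff (-X : PowerSeries ℝ) = 0 := constantCoeff_negX
  have g10 : constantCoeff g1 = 0 := by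
    have := congrArg (constantCoeff) hi2
    rwa [constantCoeff_pscomp h10, constantCoeff_X] at this
  have g20 : constantCoeff g2 = 0 := by
    have := congrArg (constantCoeff) hi4
    rwa [constantCoeff_pscomp h20, constantCoeff_X] at this
  -- canonical form of the left-hand sides
  have lhs_eq : ∀ (h g : PowerSeries ℝ), constantCoeff g = 0 →
      pscomp h (-(pscomp g (-X))) = pscomp (pscomp (pscomp h (-X)) g) (-X) := by
    intro h g hg0
    have hc : constantCoeff (pscomp g (-X)) = 0 := by
      rw [constantCoeff_pscomp hν, hg0]
    have hg' : constantCoeff (-g) = 0 := by rw [map_neg, hg0, neg_zero]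
    rw [← pscomp_negX_left hc, ← pscomp_assoc hg0 hν (-X), pscomp_negX_left hg0,
      ← pscomp_assoc hg' hν h, ← pscomp_negX_left hg0, ← pscomp_assoc hν hg0 h]
  set B1 := pscomp h1 (-X) with hB1
  set B2 := pscomp h2 (-X) with hB2
  have B10 : constantCoeff B1 = 0 := by rw [hB1, constantCoeff_pscomp hν, h10]
  have B20 : constantCoeff B2 = 0 := by rw [hB2, constantCoeff_pscomp hν, h20]
  rw [lhs_eq h1 g1 g10, lhs_eq h2 g2 g20]
  -- cancel (-X) on the right
  have E1 : ∀ A B : PowerSeries ℝ, pscomp A (-X) = pscomp B (-X) ↔ A = B := by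
    intro A B
    constructor
    · intro h
      have h' := congrArg (fun t => pscomp t (-X)) h
      beta_reduce at h'
      rwa [pscomp_assoc hν hν, pscomp_assoc hν hν, pscomp_negX_negX,
        pscomp_X_right, pscomp_X_right] at h'
    · intro h; rw [h]
  rw [E1]
  -- cancel h2 on the right
  have E2 : ∀ A B : PowerSeries ℝ, pscomp A h2 = pscomp B h2 ↔ A = B := by
    intro A B
    constructor
    · intro h
      have h' := congrArg (fun t => pscomp t g2) h
      beta_reduce at h'
      rwa [pscomp_assoc h20 g20, pscomp_assoc h20 g20, hi3,
        pscomp_X_right, pscomp_X_right] at h'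
    · intro h; rw [h]
  rw [← E2, pscomp_assoc g10 h20, pscomp_assoc g20 h20, hi4, pscomp_X_right]
  set φ := pscomp g1 h2 with hφ
  have φ0 : constantCoeff φ = 0 := by rw [hφ, constantCoeff_pscomp h20, g10]
  -- B2 = pscomp B1 ψ where ψ = -(pscomp φ (-X))
  have hB1ng1 : pscomp B1 (-g1) = X := by
    rw [hB1, pscomp_assoc hν (by rw [map_neg, g10, neg_zero]) h1,
      pscomp_negX_left (by rw [map_neg, g10, neg_zero]), neg_neg, hi1]
  have ψ0 : constantCoeff (pscomp (-g1) B2) = 0 := by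
    rw [constantCoeff_pscomp B20, map_neg, g10, neg_zero]
  have hψ : pscomp B1 (pscomp (-g1) B2) = B2 := by
    rw [← pscomp_assoc (by rw [map_neg, g10, neg_zero]) B20 B1, hB1ng1, pscomp_X_left B20]
  have E3 : pscomp B1 φ = B2 ↔ φ = pscomp (-g1) B2 := by
    constructor
    · intro h
      rw [← hψ] at h
      have h' := congrArg (fun t => pscomp (-g1) t) h
      beta_reduce at h'
      have hg1B1 : pscomp (-g1) B1 = X := by
        rw [pscomp_neg, hB1, ← pscomp_assoc h10 hν g1, hi2, pscomp_X_left hν, neg_neg]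
      rwa [← pscomp_assoc B10 φ0 (-g1), ← pscomp_assoc B10 ψ0 (-g1), hg1B1,
        pscomp_X_left φ0, pscomp_X_left ψ0] at h'
    · intro h; rw [h, hψ]
  rw [E3]
  have : pscomp (-g1) B2 = -(pscomp φ (-X)) := by
    rw [pscomp_neg, hB2, ← pscomp_assoc h20 hν g1, hφ]
  rw [this]
  exact ⟨fun h => neg_eq_iff_eq_neg.mp h.symm, fun h => neg_eq_iff_eq_neg.mp h.symm⟩
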